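/- Let A, B and C be finite-dimensional k-algebras with A ≤_J B. Then A ⊗_k C ≤_J B ⊗_k C and C ⊗_k A ≤_J C ⊗_k B, where ⊗_k denotes the tensor product of k-algebras. In particular, if A ∼_J B then A ⊗_k C ∼_J B ⊗_k C. -/

import Mathlib

set_option linter.unusedSectionVars false

open scoped TensorProduct
open MulOpposite

universe u

namespace JJ

noncomputable section

section BalTensor

variable (B : Type u) [Ring B] (M : Type u) [AddCommGroup M] [Module Bᵐᵒᵖ M]
  (N : Type u) [AddCommGroup N] [Module B N]

/-- The subgroup of relations defining the balanced tensor product `M ⊗_B N`. -/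
def balRel : Submodule ℤ (TensorProduct ℤ M N) :=
  Submodule.span ℤ { z | ∃ (b : B) (m : M) (n : N),
    z = (op b • m) ⊗ₜ[ℤ] n - m ⊗ₜ[ℤ] (b • n) }

/-- The balanced tensor product `M ⊗_B N` of a right `B`-module `M` and a left `B`-module `N`. -/
def BalTensor : Type u := TensorProduct ℤ M N ⧸ balRel B M N

instance : AddCommGroup (BalTensor B M N) :=
  inferInstanceAs (AddCommGroup (TensorProduct ℤ M N ⧸ balRel B M N))

/-- The canonical projection onto the balanced tensor product. -/
def BalTensor.mk : TensorProduct ℤ M N →+ BalTensor B M N :=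
  (balRel B M N).mkQ.toAddMonoidHom

/-- The image of a pure tensor in the balanced tensor product. -/
def BalTensor.tmul (m : M) (n : N) : BalTensor B M N := BalTensor.mk B M N (m ⊗ₜ n)

lemma BalTensor.mk_surjective : Function.Surjective (BalTensor.mk B M N) :=
  Submodule.mkQ_surjective _

lemma BalTensor.balance (b : B) (m : M) (n : N) :
    BalTensor.tmul B M N (op b • m) n = BalTensor.tmul B M N m (b • n) := by
  have h : ((op b • m) ⊗ₜ[ℤ] n - m ⊗ₜ[ℤ] (b • n)) ∈ balRel B M N :=
    Submodule.subset_span ⟨b, m, n, rfl⟩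
  have h2 := (Submodule.Quotient.mk_eq_zero (balRel B M N)).2 h
  rw [Submodule.Quotient.mk_sub] at h2
  exact sub_eq_zero.1 h2

end BalTensor

section LeftAction

variable (B : Type u) [Ring B] (M : Type u) [AddCommGroup M] [Module Bᵐᵒᵖ M]
  (N : Type u) [AddCommGroup N] [Module B N]
  (A : Type u) [Ring A] [Module A M] [SMulCommClass A Bᵐᵒᵖ M]

/-- The left action of `a : A` on the plain tensor product. -/
def lActAux (a : A) : TensorProduct ℤ M N →ₗ[ℤ] TensorProduct ℤ M N :=
  LinearMap.rTensor N (DistribMulAction.toAddMonoidHom M a).toIntLinearMap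

lemma lActAux_tmul (a : A) (m : M) (n : N) :
    lActAux M N A a (m ⊗ₜ n) = (a • m) ⊗ₜ n := by
  exact LinearMap.rTensor_tmul _ _ _ _

lemma lActAux_rel (a : A) :
    balRel B M N ≤ (balRel B M N).comap (lActAux M N A a) := by
  rw [balRel, Submodule.span_le]
  rintro z ⟨b, m, n, rfl⟩
  simp only [SetLike.mem_coe, Submodule.mem_comap, map_sub, lActAux_tmul]
  rw [smul_comm a (op b) m]
  exact Submodule.subset_span ⟨b, a • m, n, rfl⟩

/-- The left action of `A` on the balanced tensor product. -/
def lAct (a : A) : BalTensor B M N →ₗ[ℤ] BalTensor B M N :=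
  Submodule.mapQ _ _ (lActAux M N A a) (lActAux_rel B M N A a)

instance : SMul A (BalTensor B M N) := ⟨fun a x => lAct B M N A a x⟩

lemma BalTensor.lsmul_mk (a : A) (x : TensorProduct ℤ M N) :
    a • (BalTensor.mk B M N x) = BalTensor.mk B M N (lActAux M N A a x) := rfl

lemma BalTensor.lsmul_tmul (a : A) (m : M) (n : N) :
    a • (BalTensor.tmul B M N m n) = BalTensor.tmul B M N (a • m) n := by
  rw [BalTensor.tmul, BalTensor.lsmul_mk, lActAux_tmul]
  rfl

instance BalTensor.instLeftModule : Module A (BalTensor B M N) where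
  one_smul x := by
    obtain ⟨y, rfl⟩ := BalTensor.mk_surjective B M N x
    rw [BalTensor.lsmul_mk]
    congr 1
    have h : lActAux M N A (1 : A) = LinearMap.id :=
      TensorProduct.ext' fun m n =>
        (lActAux_tmul M N A 1 m n).trans (congrArg (fun x : M => x ⊗ₜ[ℤ] n) (one_smul A m))
    rw [h]; rfl
  mul_smul a b x := by
    obtain ⟨y, rfl⟩ := BalTensor.mk_surjective B M N x
    rw [BalTensor.lsmul_mk, BalTensor.lsmul_mk, BalTensor.lsmul_mk]
    congr 1
    have h : lActAux M N A (a * b) = (lActAux M N A a).comp (lActAux M N A b) :=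
      TensorProduct.ext' fun m n => by
        exact (lActAux_tmul M N A (a * b) m n).trans
          ((congrArg (fun x : M => x ⊗ₜ[ℤ] n) (mul_smul a b m)).trans
            ((lActAux_tmul M N A a (b • m) n).symm.trans
              (congrArg (fun x => lActAux M N A a x) (lActAux_tmul M N A b m n).symm)))
    rw [h]; rfl
  smul_zero a := map_zero (lAct B M N A a)
  smul_add a x y := map_add (lAct B M N A a) x y
  add_smul a b x := by
    obtain ⟨y, rfl⟩ := BalTensor.mk_surjective B M N x
    rw [BalTensor.lsmul_mk, BalTensor.lsmul_mk, BalTensor.lsmul_mk, ← map_add]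
    congr 1
    have h : lActAux M N A (a + b) = lActAux M N A a + lActAux M N A b :=
      TensorProduct.ext' fun m n => by
        exact (lActAux_tmul M N A (a + b) m n).trans
          ((congrArg (fun x : M => x ⊗ₜ[ℤ] n) (add_smul a b m)).trans
            ((TensorProduct.add_tmul ..).trans
              (congrArg₂ (· + ·) (lActAux_tmul M N A a m n).symm (lActAux_tmul M N A b m n).symm)))
    rw [h]; rfl
  zero_smul x := by
    obtain ⟨y, rfl⟩ := BalTensor.mk_surjective B M N x
    rw [BalTensor.lsmul_mk]
    have h : lActAux M N A (0 : A) = 0 :=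
      TensorProduct.ext' fun m n => by
        exact (lActAux_tmul M N A 0 m n).trans
          ((congrArg (fun x : M => x ⊗ₜ[ℤ] n) (zero_smul A m)).trans (TensorProduct.zero_tmul ..))
    rw [h]
    simp

end LeftAction

section RightAction

variable (B : Type u) [Ring B] (M : Type u) [AddCommGroup M] [Module Bᵐᵒᵖ M]
  (N : Type u) [AddCommGroup N] [Module B N]
  (C : Type u) [Ring C] [Module Cᵐᵒᵖ N] [SMulCommClass B Cᵐᵒᵖ N]

/-- The right action of `c : Cᵐᵒᵖ` on the plain tensor product. -/
def rActAux (c : Cᵐᵒᵖ) : TensorProduct ℤ M N →ₗ[ℤ] TensorProduct ℤ M N :=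
  LinearMap.lTensor M (DistribMulAction.toAddMonoidHom N c).toIntLinearMap

lemma rActAux_tmul (c : Cᵐᵒᵖ) (m : M) (n : N) :
    rActAux M N C c (m ⊗ₜ n) = m ⊗ₜ (c • n) := by
  exact LinearMap.lTensor_tmul _ _ _ _

lemma rActAux_rel (c : Cᵐᵒᵖ) :
    balRel B M N ≤ (balRel B M N).comap (rActAux M N C c) := by
  rw [balRel, Submodule.span_le]
  rintro z ⟨b, m, n, rfl⟩
  simp only [SetLike.mem_coe, Submodule.mem_comap, map_sub, rActAux_tmul]
  rw [← smul_comm b c n]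
  exact Submodule.subset_span ⟨b, m, c • n, rfl⟩

/-- The right action of `Cᵐᵒᵖ` on the balanced tensor product. -/
def rAct (c : Cᵐᵒᵖ) : BalTensor B M N →ₗ[ℤ] BalTensor B M N :=
  Submodule.mapQ _ _ (rActAux M N C c) (rActAux_rel B M N C c)

instance : SMul Cᵐᵒᵖ (BalTensor B M N) := ⟨fun c x => rAct B M N C c x⟩

lemma BalTensor.rsmul_mk (c : Cᵐᵒᵖ) (x : TensorProduct ℤ M N) :
    c • (BalTensor.mk B M N x) = BalTensor.mk B M N (rActAux M N C c x) := rfl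

lemma BalTensor.rsmul_tmul (c : Cᵐᵒᵖ) (m : M) (n : N) :
    c • (BalTensor.tmul B M N m n) = BalTensor.tmul B M N m (c • n) := by
  rw [BalTensor.tmul, BalTensor.rsmul_mk, rActAux_tmul]
  rfl

instance BalTensor.instRightModule : Module Cᵐᵒᵖ (BalTensor B M N) where
  one_smul x := by
    obtain ⟨y, rfl⟩ := BalTensor.mk_surjective B M N x
    rw [BalTensor.rsmul_mk]
    congr 1
    have h : rActAux M N C (1 : Cᵐᵒᵖ) = LinearMap.id :=
      TensorProduct.ext' fun m n =>
        (rActAux_tmul M N C 1 m n).trans (congrArg (fun x : N => m ⊗ₜ[ℤ] x) (one_smul Cᵐᵒᵖ n))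
    rw [h]; rfl
  mul_smul a b x := by
    obtain ⟨y, rfl⟩ := BalTensor.mk_surjective B M N x
    rw [BalTensor.rsmul_mk, BalTensor.rsmul_mk, BalTensor.rsmul_mk]
    congr 1
    have h : rActAux M N C (a * b) = (rActAux M N C a).comp (rActAux M N C b) :=
      TensorProduct.ext' fun m n => by
        exact (rActAux_tmul M N C (a * b) m n).trans
          ((congrArg (fun x : N => m ⊗ₜ[ℤ] x) (mul_smul a b n)).trans
            ((rActAux_tmul M N C a m (b • n)).symm.trans
              (congrArg (fun x => rActAux M N C a x) (rActAux_tmul M N C b m n).symm)))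
    rw [h]; rfl
  smul_zero c := map_zero (rAct B M N C c)
  smul_add c x y := map_add (rAct B M N C c) x y
  add_smul a b x := by
    obtain ⟨y, rfl⟩ := BalTensor.mk_surjective B M N x
    rw [BalTensor.rsmul_mk, BalTensor.rsmul_mk, BalTensor.rsmul_mk, ← map_add]
    congr 1
    have h : rActAux M N C (a + b) = rActAux M N C a + rActAux M N C b :=
      TensorProduct.ext' fun m n => by
        exact (rActAux_tmul M N C (a + b) m n).trans
          ((congrArg (fun x : N => m ⊗ₜ[ℤ] x) (add_smul a b n)).trans
            ((TensorProduct.tmul_add ..).trans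
              (congrArg₂ (· + ·) (rActAux_tmul M N C a m n).symm (rActAux_tmul M N C b m n).symm)))
    rw [h]; rfl
  zero_smul x := by
    obtain ⟨y, rfl⟩ := BalTensor.mk_surjective B M N x
    rw [BalTensor.rsmul_mk]
    have h : rActAux M N C (0 : Cᵐᵒᵖ) = 0 :=
      TensorProduct.ext' fun m n => by
        exact (rActAux_tmul M N C 0 m n).trans
          ((congrArg (fun x : N => m ⊗ₜ[ℤ] x) (zero_smul Cᵐᵒᵖ n)).trans (TensorProduct.tmul_zero ..))
    rw [h]
    simp

end RightAction

section Comm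

variable (B : Type u) [Ring B] (M : Type u) [AddCommGroup M] [Module Bᵐᵒᵖ M]
  (N : Type u) [AddCommGroup N] [Module B N]
  (A : Type u) [Ring A] [Module A M] [SMulCommClass A Bᵐᵒᵖ M]
  (C : Type u) [Ring C] [Module Cᵐᵒᵖ N] [SMulCommClass B Cᵐᵒᵖ N]

instance BalTensor.instSMulCommClass : SMulCommClass A Cᵐᵒᵖ (BalTensor B M N) := by
  constructor
  intro a c x
  obtain ⟨y, rfl⟩ := BalTensor.mk_surjective B M N x
  rw [BalTensor.rsmul_mk, BalTensor.lsmul_mk, BalTensor.lsmul_mk, BalTensor.rsmul_mk]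
  congr 1
  have h : (lActAux M N A a).comp (rActAux M N C c)
      = (rActAux M N C c).comp (lActAux M N A a) :=
    TensorProduct.ext' fun m n => by
      exact ((congrArg (fun x => lActAux M N A a x) (rActAux_tmul M N C c m n)).trans
        (lActAux_tmul M N A a m (c • n))).trans
        ((congrArg (fun x => rActAux M N C c x) (lActAux_tmul M N A a m n)).trans
          (rActAux_tmul M N C c (a • m) n)).symm
  exact DFunLike.congr_fun h y

end Comm

section BimodHom

variable (A : Type u) [Ring A] (C : Type u) [Ring C]
variable (X : Type u) [AddCommGroup X] [Module A X] [Module Cᵐᵒᵖ X]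
variable (Y : Type u) [AddCommGroup Y] [Module A Y] [Module Cᵐᵒᵖ Y]

/-- A map of `(A,C)`-bimodules: additive, left `A`-equivariant and right `C`-equivariant. -/
structure IsBimodHom (f : X → Y) : Prop where
  map_add : ∀ x y, f (x + y) = f x + f y
  map_lsmul : ∀ (a : A) (x : X), f (a • x) = a • f x
  map_rsmul : ∀ (c : Cᵐᵒᵖ) (x : X), f (c • x) = c • f x

/-- `X` is (isomorphic to) a direct summand of `Y` as an `(A,C)`-bimodule,
i.e. a retract of `Y`. -/
def IsBimodSummand : Prop :=
  ∃ (i : X → Y) (p : Y → X), IsBimodHom A C X Y i ∧ IsBimodHom A C Y X p ∧ ∀ x, p (i x) = x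

end BimodHom

section Jorder

variable (k : Type u) [Field k]

/-- A finite-dimensional `(A,B)`-bimodule over `k`, whose two induced `k`-actions agree
with the given one. -/
structure BimodData (A B : Type u) [Ring A] [Ring B] [Algebra k A] [Algebra k B] :
    Type (u + 1) where
  X : Type u
  [acg : AddCommGroup X]
  [modk : Module k X]
  [modl : Module A X]
  [modr : Module Bᵐᵒᵖ X]
  [scc : SMulCommClass A Bᵐᵒᵖ X]
  [tl : IsScalarTower k A X]
  [tr : IsScalarTower k Bᵐᵒᵖ X]
  [fd : FiniteDimensional k X]

attribute [instance] BimodData.acg BimodData.modk BimodData.modl BimodData.modr BimodData.scc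
  BimodData.tl BimodData.tr BimodData.fd

variable (A B : Type u) [Ring A] [Ring B] [Algebra k A] [Algebra k B]

/-- `A ≥_J B`: there are finite-dimensional bimodules `M`, `N` such that the regular
`A`-`A`-bimodule `A` is a direct summand of `M ⊗_B N`. -/
def Jge : Prop :=
  ∃ (M : BimodData k A B) (N : BimodData k B A),
    IsBimodSummand A A A (BalTensor B M.X N.X)

/-- `A ≤_J B`. -/
def Jle : Prop := Jge k B A

/-- `A ∼_J B`: two-sided equivalence. -/
def Jequiv : Prop := Jge k A B ∧ Jge k B A

/-- `A >_J B`: strict two-sided inequality. -/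
def Jgt : Prop := Jge k A B ∧ ¬ Jge k B A

end Jorder

section Ext

variable (k : Type u) [Field k] (C : Type u) [Ring C] [Algebra k C]

section ExtXDef

variable (X : Type u) [AddCommGroup X] [Module k X]

/-- Type synonym for `X ⊗[k] C`, carrying the extended bimodule structures. -/
def ExtX : Type u := X ⊗[k] C

instance : AddCommGroup (ExtX k C X) := inferInstanceAs (AddCommGroup (X ⊗[k] C))

instance : Module k (ExtX k C X) := inferInstanceAs (Module k (X ⊗[k] C))

instance [Module.Finite k C] [Module.Finite k X] : Module.Finite k (ExtX k C X) :=
  inferInstanceAs (Module.Finite k (X ⊗[k] C))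

lemma ExtX.induction_on {P : ExtX k C X → Prop} (y : ExtX k C X) (zero : P 0)
    (tmul : ∀ (x : X) (c : C), P (x ⊗ₜ[k] c)) (add : ∀ a b, P a → P b → P (a + b)) : P y :=
  TensorProduct.induction_on y zero tmul add

end ExtXDef

section ExtLeft

variable (R : Type u) [Ring R] [Algebra k R]
variable (X : Type u) [AddCommGroup X] [Module k X] [Module R X] [IsScalarTower k R X]

/-- The left action of `R ⊗ C` on `X ⊗ C`. -/
def lext : R ⊗[k] C →ₐ[k] Module.End k (X ⊗[k] C) :=
  (Module.endTensorEndAlgHom (R := k) (S := k) (A := k) (M := X) (N := C)).comp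
    (Algebra.TensorProduct.map (Algebra.lsmul k k X) (Algebra.lsmul k k C))

instance extLMod : Module (R ⊗[k] C) (ExtX k C X) :=
  Module.compHom (X ⊗[k] C) (lext k C R X).toRingHom

lemma ext_lsmul_def (ρ : R ⊗[k] C) (y : ExtX k C X) :
    ρ • y = lext k C R X ρ y := rfl

lemma ext_lsmul_tmul (r : R) (c : C) (x : X) (c₁ : C) :
    @HSMul.hSMul (R ⊗[k] C) (ExtX k C X) (ExtX k C X) instHSMul
      (r ⊗ₜ[k] c) (x ⊗ₜ[k] c₁)
    = ((r • x) ⊗ₜ[k] (c * c₁) : ExtX k C X) := by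
  erw [ext_lsmul_def]
  simp [lext, Module.endTensorEndAlgHom_apply, smul_eq_mul]
  rfl

instance extLTower : IsScalarTower k (R ⊗[k] C) (ExtX k C X) :=
  ⟨fun x ρ y => by
    rw [ext_lsmul_def, ext_lsmul_def, map_smul]
    rfl⟩

end ExtLeft

section ExtRight

variable (S : Type u) [Ring S] [Algebra k S]
variable (X : Type u) [AddCommGroup X] [Module k X] [Module Sᵐᵒᵖ X] [IsScalarTower k Sᵐᵒᵖ X]

/-- The right action of `(S ⊗ C)ᵐᵒᵖ` on `X ⊗ C`. -/
def rext : (S ⊗[k] C)ᵐᵒᵖ →ₐ[k] Module.End k (X ⊗[k] C) :=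
  ((Module.endTensorEndAlgHom (R := k) (S := k) (A := k) (M := X) (N := C)).comp
    (Algebra.TensorProduct.map (Algebra.lsmul k k X) (Algebra.lsmul k k C))).comp
    (Algebra.TensorProduct.opAlgEquiv k k S C).symm.toAlgHom

instance extRMod : Module (S ⊗[k] C)ᵐᵒᵖ (ExtX k C X) :=
  Module.compHom (X ⊗[k] C) (rext k C S X).toRingHom

lemma ext_rsmul_def (σ : (S ⊗[k] C)ᵐᵒᵖ) (y : ExtX k C X) :
    σ • y = rext k C S X σ y := rfl

lemma ext_rsmul_tmul (s : S) (c : C) (x : X) (c₁ : C) :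
    @HSMul.hSMul (S ⊗[k] C)ᵐᵒᵖ (ExtX k C X) (ExtX k C X) instHSMul
      (op (s ⊗ₜ[k] c)) (x ⊗ₜ[k] c₁)
    = ((op s • x) ⊗ₜ[k] (c₁ * c) : ExtX k C X) := by
  erw [ext_rsmul_def]
  simp [rext, Module.endTensorEndAlgHom_apply, Algebra.TensorProduct.opAlgEquiv_symm_apply]
  rfl

instance extRTower : IsScalarTower k (S ⊗[k] C)ᵐᵒᵖ (ExtX k C X) :=
  ⟨fun x σ y => by
    rw [ext_rsmul_def, ext_rsmul_def, map_smul]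
    rfl⟩

end ExtRight

section ExtComm

variable (R S : Type u) [Ring R] [Algebra k R] [Ring S] [Algebra k S]
variable (X : Type u) [AddCommGroup X] [Module k X] [Module R X] [IsScalarTower k R X]
  [Module Sᵐᵒᵖ X] [IsScalarTower k Sᵐᵒᵖ X] [SMulCommClass R Sᵐᵒᵖ X]

instance extSMulCommClass : SMulCommClass (R ⊗[k] C) (S ⊗[k] C)ᵐᵒᵖ (ExtX k C X) := by
  constructor
  intro ρ σ y
  have key : ∀ (r : R) (c : C) (s : S) (c' : C) (y : ExtX k C X),
      (r ⊗ₜ[k] c) • (op (s ⊗ₜ[k] c')) • y = (op (s ⊗ₜ[k] c')) • (r ⊗ₜ[k] c) • y := by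
    intro r c s c' y
    induction y using ExtX.induction_on with
    | zero => simp
    | tmul x c₁ =>
        rw [ext_rsmul_tmul, ext_lsmul_tmul, ext_lsmul_tmul, ext_rsmul_tmul,
          smul_comm, mul_assoc]
    | add y₁ y₂ h₁ h₂ => simp only [smul_add, h₁, h₂]
  have keyσ : ∀ (z : S ⊗[k] C) (r : R) (c : C) (y : ExtX k C X),
      (r ⊗ₜ[k] c) • (op z) • y = (op z) • (r ⊗ₜ[k] c) • y := by
    intro z r c y
    induction z using TensorProduct.induction_on with
    | zero => simp only [op_zero, zero_smul, smul_zero]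
    | tmul s c' => exact key r c s c' y
    | add z₁ z₂ h₁ h₂ =>
        simp only [op_add, add_smul, smul_add, h₁, h₂]
  induction ρ using TensorProduct.induction_on with
  | zero => simp only [zero_smul, smul_zero]
  | tmul r c =>
      obtain ⟨z, rfl⟩ : ∃ z, σ = op z := ⟨σ.unop, rfl⟩
      exact keyσ z r c y
  | add ρ₁ ρ₂ h₁ h₂ => simp only [add_smul, smul_add, h₁, h₂]

end ExtComm

end Ext

section Congr

variable (k : Type u) [Field k]
variable (A B A' B' : Type u) [Ring A] [Ring B] [Ring A'] [Ring B']
  [Algebra k A] [Algebra k B] [Algebra k A'] [Algebra k B']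

theorem Jge_congr (eA : A' ≃ₐ[k] A) (eB : B' ≃ₐ[k] B) (h : Jge k A B) : Jge k A' B' := by
  obtain ⟨M, N, i, p, hi, hp, hpi⟩ := h
  -- transported module structures on M.X
  letI mAl : Module A' M.X := Module.compHom _ (eA : A' →+* A)
  letI mBr : Module B'ᵐᵒᵖ M.X := Module.compHom _ ((AlgEquiv.op eB : B'ᵐᵒᵖ ≃ₐ[k] Bᵐᵒᵖ) : B'ᵐᵒᵖ →+* Bᵐᵒᵖ)
  have hmAl : ∀ (a' : A') (m : M.X), a' • m = eA a' • m := fun _ _ => rfl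
  have hmBr : ∀ (b' : B'ᵐᵒᵖ) (m : M.X), b' • m = (op (eB b'.unop) : Bᵐᵒᵖ) • m := fun _ _ => rfl
  letI : SMulCommClass A' B'ᵐᵒᵖ M.X :=
    ⟨fun a' b' m => by rw [hmAl, hmBr, hmAl, hmBr, smul_comm]⟩
  letI : IsScalarTower k A' M.X :=
    ⟨fun x a' m => by rw [hmAl, hmAl, map_smul, smul_assoc]⟩
  letI : IsScalarTower k B'ᵐᵒᵖ M.X :=
    ⟨fun x b' m => by
      rw [hmBr, hmBr]
      show (op (eB (x • b'.unop)) : Bᵐᵒᵖ) • m = x • _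
      rw [map_smul, MulOpposite.op_smul, smul_assoc]⟩
  -- transported module structures on N.X
  letI nBl : Module B' N.X := Module.compHom _ (eB : B' →+* B)
  letI nAr : Module A'ᵐᵒᵖ N.X := Module.compHom _ ((AlgEquiv.op eA : A'ᵐᵒᵖ ≃ₐ[k] Aᵐᵒᵖ) : A'ᵐᵒᵖ →+* Aᵐᵒᵖ)
  have hnBl : ∀ (b' : B') (n : N.X), b' • n = eB b' • n := fun _ _ => rfl
  have hnAr : ∀ (a' : A'ᵐᵒᵖ) (n : N.X), a' • n = (op (eA a'.unop) : Aᵐᵒᵖ) • n := fun _ _ => rfl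
  letI : SMulCommClass B' A'ᵐᵒᵖ N.X :=
    ⟨fun b' a' n => by rw [hnBl, hnAr, hnBl, hnAr, smul_comm]⟩
  letI : IsScalarTower k B' N.X :=
    ⟨fun x b' n => by rw [hnBl, hnBl, map_smul, smul_assoc]⟩
  letI : IsScalarTower k A'ᵐᵒᵖ N.X :=
    ⟨fun x a' n => by
      rw [hnAr, hnAr]
      show (op (eA (x • a'.unop)) : Aᵐᵒᵖ) • n = x • _
      rw [map_smul, MulOpposite.op_smul, smul_assoc]⟩
  have hrel : balRel B' M.X N.X = balRel B M.X N.X := by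
    apply le_antisymm
    · rw [balRel, Submodule.span_le]
      rintro z ⟨b', m, n, rfl⟩
      refine Submodule.subset_span ⟨eB b', m, n, ?_⟩
      simp [hmBr, hnBl]
    · rw [balRel, Submodule.span_le]
      rintro z ⟨b, m, n, rfl⟩
      refine Submodule.subset_span ⟨eB.symm b, m, n, ?_⟩
      simp [hmBr, hnBl]
  letI q : BalTensor B' M.X N.X ≃ₗ[ℤ] BalTensor B M.X N.X :=
    Submodule.quotEquivOfEq _ _ hrel
  have hq : ∀ t, q (BalTensor.mk B' M.X N.X t) = BalTensor.mk B M.X N.X t := fun t => rfl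
  have hqs : ∀ t, q.symm (BalTensor.mk B M.X N.X t) = BalTensor.mk B' M.X N.X t := by
    intro t
    apply q.injective
    rw [LinearEquiv.apply_symm_apply]
    exact (hq t).symm
  -- compatibility of the actions with q.symm
  have hL : ∀ (a' : A') (w : BalTensor B M.X N.X),
      a' • q.symm w = q.symm (eA a' • w) := by
    intro a' w
    obtain ⟨t, rfl⟩ := BalTensor.mk_surjective B M.X N.X w
    rw [hqs, BalTensor.lsmul_mk, BalTensor.lsmul_mk, hqs]
    congr 1
  have hR : ∀ (a' : A') (w : BalTensor B M.X N.X),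
      (op a') • q.symm w = q.symm ((op (eA a') : Aᵐᵒᵖ) • w) := by
    intro a' w
    obtain ⟨t, rfl⟩ := BalTensor.mk_surjective B M.X N.X w
    rw [hqs, BalTensor.rsmul_mk, BalTensor.rsmul_mk, hqs]
    congr 1
  refine ⟨⟨M.X⟩, ⟨N.X⟩, fun a => q.symm (i (eA a)), fun w => eA.symm (p (q w)), ?_, ?_, ?_⟩
  · refine ⟨fun x y => ?_, fun a' x => ?_, fun a'' x => ?_⟩
    · show q.symm (i (eA (x + y))) = q.symm (i (eA x)) + q.symm (i (eA y))
      rw [map_add, hi.map_add, map_add]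
    · show q.symm (i (eA (a' • x))) = a' • q.symm (i (eA x))
      have h1 : eA (a' • x) = eA a' • eA x := by
        rw [smul_eq_mul, smul_eq_mul, map_mul]
      rw [h1, hi.map_lsmul, ← hL]
    · show q.symm (i (eA (a'' • x))) = a'' • q.symm (i (eA x))
      rw [← MulOpposite.op_unop a'']
      have h1 : eA ((op a''.unop) • x) = (op (eA a''.unop) : Aᵐᵒᵖ) • eA x := by
        rw [op_smul_eq_mul, op_smul_eq_mul, map_mul]
      rw [h1, hi.map_rsmul, ← hR]
  · refine ⟨fun x y => ?_, fun a' w => ?_, fun a'' w => ?_⟩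
    · show eA.symm (p (q (x + y))) = eA.symm (p (q x)) + eA.symm (p (q y))
      rw [map_add, hp.map_add, map_add]
    · show eA.symm (p (q (a' • w))) = a' • eA.symm (p (q w))
      obtain ⟨w₀, rfl⟩ : ∃ w₀, w = q.symm w₀ := ⟨q w, (q.symm_apply_apply w).symm⟩
      rw [hL, LinearEquiv.apply_symm_apply, LinearEquiv.apply_symm_apply, hp.map_lsmul]
      rw [smul_eq_mul, smul_eq_mul, map_mul, AlgEquiv.symm_apply_apply]
    · show eA.symm (p (q (a'' • w))) = a'' • eA.symm (p (q w))
      rw [← MulOpposite.op_unop a'']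
      obtain ⟨w₀, rfl⟩ : ∃ w₀, w = q.symm w₀ := ⟨q w, (q.symm_apply_apply w).symm⟩
      rw [hR, LinearEquiv.apply_symm_apply, LinearEquiv.apply_symm_apply, hp.map_rsmul]
      rw [op_smul_eq_mul, op_smul_eq_mul, map_mul, AlgEquiv.symm_apply_apply]
  · intro a
    show eA.symm (p (q (q.symm (i (eA a))))) = a
    rw [LinearEquiv.apply_symm_apply, hpi, AlgEquiv.symm_apply_apply]

end Congr

section BalLemmas

variable (B : Type u) [Ring B] (M : Type u) [AddCommGroup M] [Module Bᵐᵒᵖ M]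
  (N : Type u) [AddCommGroup N] [Module B N]

lemma BalTensor.tmul_add (m : M) (n₁ n₂ : N) :
    BalTensor.tmul B M N m (n₁ + n₂) = BalTensor.tmul B M N m n₁ + BalTensor.tmul B M N m n₂ := by
  unfold BalTensor.tmul
  rw [TensorProduct.tmul_add, map_add]

lemma BalTensor.add_tmul (m₁ m₂ : M) (n : N) :
    BalTensor.tmul B M N (m₁ + m₂) n = BalTensor.tmul B M N m₁ n + BalTensor.tmul B M N m₂ n := by
  unfold BalTensor.tmul
  rw [TensorProduct.add_tmul, map_add]

end BalLemmas

section Main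

variable (k : Type u) [Field k]
variable (A B C : Type u) [Ring A] [Algebra k A] [Ring B] [Algebra k B] [Ring C] [Algebra k C]
variable [FiniteDimensional k C]
variable (M : BimodData k B A) (N : BimodData k A B)

/-- The bilinear map underlying `psi`. -/
def psiF : M.X →+ N.X →+
    BalTensor (A ⊗[k] C) (ExtX k C M.X) (ExtX k C N.X) where
  toFun m :=
    { toFun := fun n =>
        BalTensor.tmul (A ⊗[k] C) (ExtX k C M.X) (ExtX k C N.X) (m ⊗ₜ[k] 1) (n ⊗ₜ[k] 1)
      map_zero' := by
        show BalTensor.tmul (A ⊗[k] C) (ExtX k C M.X) (ExtX k C N.X)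
          (m ⊗ₜ[k] 1) ((0 : N.X) ⊗ₜ[k] 1) = 0
        unfold BalTensor.tmul
        erw [TensorProduct.zero_tmul, TensorProduct.tmul_zero, map_zero]
      map_add' := fun n₁ n₂ => by
        show BalTensor.tmul (A ⊗[k] C) (ExtX k C M.X) (ExtX k C N.X)
            (m ⊗ₜ[k] 1) ((n₁ + n₂) ⊗ₜ[k] 1)
          = BalTensor.tmul (A ⊗[k] C) (ExtX k C M.X) (ExtX k C N.X) (m ⊗ₜ[k] 1) (n₁ ⊗ₜ[k] 1)
            + BalTensor.tmul (A ⊗[k] C) (ExtX k C M.X) (ExtX k C N.X) (m ⊗ₜ[k] 1) (n₂ ⊗ₜ[k] 1)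
        erw [TensorProduct.add_tmul, BalTensor.tmul_add] }
  map_zero' := by
    ext n
    show BalTensor.tmul (A ⊗[k] C) (ExtX k C M.X) (ExtX k C N.X) ((0 : M.X) ⊗ₜ[k] 1) (n ⊗ₜ[k] 1) = 0
    unfold BalTensor.tmul
    erw [TensorProduct.zero_tmul, TensorProduct.zero_tmul, map_zero]
  map_add' m₁ m₂ := by
    ext n
    show BalTensor.tmul (A ⊗[k] C) (ExtX k C M.X) (ExtX k C N.X) ((m₁ + m₂) ⊗ₜ[k] 1) (n ⊗ₜ[k] 1) = _
    erw [TensorProduct.add_tmul, BalTensor.add_tmul]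
    rfl

/-- `psi` on the plain tensor product. -/
def psi0 : TensorProduct ℤ M.X N.X →+
    BalTensor (A ⊗[k] C) (ExtX k C M.X) (ExtX k C N.X) :=
  TensorProduct.liftAddHom (psiF k A B C M N) fun z m n => by
    rw [map_zsmul, AddMonoidHom.smul_apply, map_zsmul]

lemma psi0_rel : balRel A M.X N.X ≤
    LinearMap.ker (psi0 k A B C M N).toIntLinearMap := by
  rw [balRel, Submodule.span_le]
  rintro z ⟨a, m, n, rfl⟩
  simp only [SetLike.mem_coe, LinearMap.mem_ker, map_sub, AddMonoidHom.coe_toIntLinearMap]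
  rw [sub_eq_zero]
  show psi0 k A B C M N ((op a • m) ⊗ₜ[ℤ] n) = psi0 k A B C M N (m ⊗ₜ[ℤ] (a • n))
  show BalTensor.tmul (A ⊗[k] C) (ExtX k C M.X) (ExtX k C N.X) ((op a • m) ⊗ₜ[k] 1) (n ⊗ₜ[k] 1)
    = BalTensor.tmul (A ⊗[k] C) (ExtX k C M.X) (ExtX k C N.X) (m ⊗ₜ[k] 1) ((a • n) ⊗ₜ[k] 1)
  have h1 := ext_rsmul_tmul k C A M.X a 1 m 1
  have h2 := ext_lsmul_tmul k C A N.X a 1 n 1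
  rw [one_mul] at h1
  rw [one_mul] at h2
  erw [← h1, ← h2, BalTensor.balance]

/-- The canonical map `M ⊗_A N → (M ⊗ C) ⊗_{A ⊗ C} (N ⊗ C)`. -/
def psiLin : BalTensor A M.X N.X →ₗ[ℤ]
    BalTensor (A ⊗[k] C) (ExtX k C M.X) (ExtX k C N.X) :=
  Submodule.liftQ _ (psi0 k A B C M N).toIntLinearMap (psi0_rel k A B C M N)

lemma psi_mk (t : TensorProduct ℤ M.X N.X) :
    psiLin k A B C M N (BalTensor.mk A M.X N.X t) = psi0 k A B C M N t := rfl

lemma psi_tmul (m : M.X) (n : N.X) :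
    psiLin k A B C M N (BalTensor.tmul A M.X N.X m n)
      = BalTensor.tmul (A ⊗[k] C) (ExtX k C M.X) (ExtX k C N.X) (m ⊗ₜ[k] 1) (n ⊗ₜ[k] 1) := rfl

lemma psi_lsmul (b : B) (w : BalTensor A M.X N.X) :
    psiLin k A B C M N (b • w) = ((b ⊗ₜ[k] (1 : C)) : B ⊗[k] C) • psiLin k A B C M N w := by
  obtain ⟨t, rfl⟩ := BalTensor.mk_surjective A M.X N.X w
  induction t using TensorProduct.induction_on with
  | zero => simp only [map_zero, smul_zero]
  | tmul m n =>
      erw [show BalTensor.mk A M.X N.X (m ⊗ₜ[ℤ] n) = BalTensor.tmul A M.X N.X m n from rfl,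
        BalTensor.lsmul_tmul, psi_tmul, psi_tmul, BalTensor.lsmul_tmul, ext_lsmul_tmul, one_mul]
  | add t₁ t₂ h₁ h₂ => simp only [map_add, smul_add, h₁, h₂]

lemma psi_rsmul (b : B) (w : BalTensor A M.X N.X) :
    psiLin k A B C M N (op b • w) = op ((b ⊗ₜ[k] (1 : C)) : B ⊗[k] C) • psiLin k A B C M N w := by
  obtain ⟨t, rfl⟩ := BalTensor.mk_surjective A M.X N.X w
  induction t using TensorProduct.induction_on with
  | zero => simp only [map_zero, smul_zero]
  | tmul m n =>
      erw [show BalTensor.mk A M.X N.X (m ⊗ₜ[ℤ] n) = BalTensor.tmul A M.X N.X m n from rfl,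
        BalTensor.rsmul_tmul, psi_tmul, psi_tmul, BalTensor.rsmul_tmul, ext_rsmul_tmul, one_mul]
  | add t₁ t₂ h₁ h₂ => simp only [map_add, smul_add, h₁, h₂]

lemma psi_mid (c : C) (w : BalTensor A M.X N.X) :
    (((1 : B) ⊗ₜ[k] c) : B ⊗[k] C) • psiLin k A B C M N w
      = op (((1 : B) ⊗ₜ[k] c) : B ⊗[k] C) • psiLin k A B C M N w := by
  obtain ⟨t, rfl⟩ := BalTensor.mk_surjective A M.X N.X w
  induction t using TensorProduct.induction_on with
  | zero => simp only [map_zero, smul_zero]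
  | tmul m n =>
      erw [show BalTensor.mk A M.X N.X (m ⊗ₜ[ℤ] n) = BalTensor.tmul A M.X N.X m n from rfl,
        psi_tmul, BalTensor.lsmul_tmul, BalTensor.rsmul_tmul]
      have hbal := BalTensor.balance (A ⊗[k] C) (ExtX k C M.X) (ExtX k C N.X)
        ((1 : A) ⊗ₜ[k] c) (m ⊗ₜ[k] (1 : C)) (n ⊗ₜ[k] (1 : C))
      rw [ext_rsmul_tmul, ext_lsmul_tmul] at hbal
      rw [ext_rsmul_tmul, ext_lsmul_tmul]
      simp only [op_one, one_smul, one_mul, mul_one] at hbal ⊢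
      exact hbal
  | add t₁ t₂ h₁ h₂ => simp only [map_add, smul_add, h₁, h₂]

lemma psi_algk (x : k) (w : BalTensor A M.X N.X) :
    (algebraMap k (B ⊗[k] C) x) • psiLin k A B C M N w
      = op (algebraMap k (B ⊗[k] C) x) • psiLin k A B C M N w := by
  obtain ⟨t, rfl⟩ := BalTensor.mk_surjective A M.X N.X w
  induction t using TensorProduct.induction_on with
  | zero => simp only [map_zero, smul_zero]
  | tmul m n =>
      erw [show BalTensor.mk A M.X N.X (m ⊗ₜ[ℤ] n) = BalTensor.tmul A M.X N.X m n from rfl,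
        psi_tmul, Algebra.TensorProduct.algebraMap_apply, BalTensor.lsmul_tmul,
        BalTensor.rsmul_tmul]
      have hbal := BalTensor.balance (A ⊗[k] C) (ExtX k C M.X) (ExtX k C N.X)
        ((algebraMap k A x) ⊗ₜ[k] (1 : C)) (m ⊗ₜ[k] (1 : C)) (n ⊗ₜ[k] (1 : C))
      rw [ext_rsmul_tmul, ext_lsmul_tmul] at hbal
      rw [ext_rsmul_tmul, ext_lsmul_tmul]
      simp only [one_mul, mul_one, ← MulOpposite.algebraMap_apply, algebraMap_smul] at hbal ⊢
      exact hbal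
  | add t₁ t₂ h₁ h₂ => simp only [map_add, smul_add, h₁, h₂]

section WithMaps

variable (i : B → BalTensor A M.X N.X) (p : BalTensor A M.X N.X → B)

/-- The bilinear map underlying `iT`. -/
def iF (hi : IsBimodHom B B B (BalTensor A M.X N.X) i) : B →+ C →+
    BalTensor (A ⊗[k] C) (ExtX k C M.X) (ExtX k C N.X) where
  toFun b :=
    { toFun := fun c => op (((1 : B) ⊗ₜ[k] c) : B ⊗[k] C) • psiLin k A B C M N (i b)
      map_zero' := by
        show op (((1 : B) ⊗ₜ[k] (0 : C)) : B ⊗[k] C) • psiLin k A B C M N (i b) = 0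
        rw [TensorProduct.tmul_zero, op_zero, zero_smul]
      map_add' := fun c₁ c₂ => by
        show op (((1 : B) ⊗ₜ[k] (c₁ + c₂)) : B ⊗[k] C) • psiLin k A B C M N (i b)
          = op (((1 : B) ⊗ₜ[k] c₁) : B ⊗[k] C) • psiLin k A B C M N (i b)
            + op (((1 : B) ⊗ₜ[k] c₂) : B ⊗[k] C) • psiLin k A B C M N (i b)
        rw [TensorProduct.tmul_add, op_add, add_smul] }
  map_zero' := by
    ext c
    show op (((1 : B) ⊗ₜ[k] c) : B ⊗[k] C) • psiLin k A B C M N (i 0) = 0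
    have h0 : i 0 = 0 := by
      have h := hi.map_add 0 0
      rw [add_zero] at h
      exact (left_eq_add.mp h)
    rw [h0, map_zero, smul_zero]
  map_add' b₁ b₂ := by
    ext c
    show op (((1 : B) ⊗ₜ[k] c) : B ⊗[k] C) • psiLin k A B C M N (i (b₁ + b₂)) = _
    rw [hi.map_add, map_add, smul_add]
    rfl

/-- The inclusion `B ⊗ C → (M ⊗ C) ⊗_{A ⊗ C} (N ⊗ C)`. -/
def iT (hi : IsBimodHom B B B (BalTensor A M.X N.X) i) : B ⊗[k] C →+
    BalTensor (A ⊗[k] C) (ExtX k C M.X) (ExtX k C N.X) :=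
  TensorProduct.liftAddHom (iF k A B C M N i hi) <| fun x b c => by
    show op (((1 : B) ⊗ₜ[k] c) : B ⊗[k] C) • psiLin k A B C M N (i (x • b))
      = op (((1 : B) ⊗ₜ[k] (x • c)) : B ⊗[k] C) • psiLin k A B C M N (i b)
    have h1 : i (x • b) = algebraMap k B x • i b := by
      rw [Algebra.smul_def, ← smul_eq_mul]
      exact hi.map_lsmul _ b
    rw [h1, psi_lsmul, ← Algebra.TensorProduct.algebraMap_apply, psi_algk,
      TensorProduct.tmul_smul, Algebra.smul_def, op_mul, mul_smul]

lemma iT_tmul (hi : IsBimodHom B B B (BalTensor A M.X N.X) i) (b : B) (c : C) :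
    iT k A B C M N i hi (b ⊗ₜ[k] c)
      = op (((1 : B) ⊗ₜ[k] c) : B ⊗[k] C) • psiLin k A B C M N (i b) := rfl

/-- The bilinear map `M.X → N.X → B` induced by `p`. -/
def pB (hp : IsBimodHom B B (BalTensor A M.X N.X) B p) : M.X →ₗ[k] N.X →ₗ[k] B :=
  LinearMap.mk₂ k (fun m n => p (BalTensor.tmul A M.X N.X m n))
    (fun m₁ m₂ n => by
      show p (BalTensor.tmul A M.X N.X (m₁ + m₂) n)
        = p (BalTensor.tmul A M.X N.X m₁ n) + p (BalTensor.tmul A M.X N.X m₂ n)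
      rw [BalTensor.add_tmul, hp.map_add])
    (fun x m n => by
      show p (BalTensor.tmul A M.X N.X (x • m) n) = x • p (BalTensor.tmul A M.X N.X m n)
      have h1 : (x : k) • m = (algebraMap k B x) • m := (algebraMap_smul B x m).symm
      rw [h1, ← BalTensor.lsmul_tmul, hp.map_lsmul, smul_eq_mul, ← Algebra.smul_def])
    (fun m n₁ n₂ => by
      show p (BalTensor.tmul A M.X N.X m (n₁ + n₂))
        = p (BalTensor.tmul A M.X N.X m n₁) + p (BalTensor.tmul A M.X N.X m n₂)
      rw [BalTensor.tmul_add, hp.map_add])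
    (fun x m n => by
      show p (BalTensor.tmul A M.X N.X m (x • n)) = x • p (BalTensor.tmul A M.X N.X m n)
      have h1 : (x : k) • n = (op (algebraMap k B x) : Bᵐᵒᵖ) • n := by
        rw [← MulOpposite.algebraMap_apply, algebraMap_smul]
      rw [h1, ← BalTensor.rsmul_tmul, hp.map_rsmul, op_smul_eq_mul, ← Algebra.commutes,
        ← Algebra.smul_def])

/-- The projection `(M ⊗ C) ⊗ (N ⊗ C) → B ⊗ C` as a `k`-linear map. -/
def Phi (hp : IsBimodHom B B (BalTensor A M.X N.X) B p) :
    (ExtX k C M.X) ⊗[k] (ExtX k C N.X) →ₗ[k] B ⊗[k] C :=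
  (TensorProduct.map (TensorProduct.lift (pB k A B M N p hp)) (LinearMap.mul' k C)).comp
    (TensorProduct.tensorTensorTensorComm k M.X C N.X C).toLinearMap

lemma Phi_tmul (hp : IsBimodHom B B (BalTensor A M.X N.X) B p)
    (m : M.X) (c₁ : C) (n : N.X) (c₂ : C) :
    Phi k A B C M N p hp ((m ⊗ₜ[k] c₁) ⊗ₜ[k] (n ⊗ₜ[k] c₂))
      = (p (BalTensor.tmul A M.X N.X m n)) ⊗ₜ[k] (c₁ * c₂) := by
  have h : ((TensorProduct.map (TensorProduct.lift (pB k A B M N p hp))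
        (LinearMap.mul' k C)).comp
      (TensorProduct.tensorTensorTensorComm k M.X C N.X C).toLinearMap)
      (((m ⊗ₜ[k] c₁) ⊗ₜ[k] (n ⊗ₜ[k] c₂) : (M.X ⊗[k] C) ⊗[k] (N.X ⊗[k] C)))
      = p (BalTensor.tmul A M.X N.X m n) ⊗ₜ[k] (c₁ * c₂) := by
    simp [pB, TensorProduct.tensorTensorTensorComm_tmul]
  exact h

/-- The bilinear (over `ℤ`) version of `Phi`. -/
def pF (hp : IsBimodHom B B (BalTensor A M.X N.X) B p) :
    (ExtX k C M.X) →+ (ExtX k C N.X) →+ B ⊗[k] C where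
  toFun m' := ((Phi k A B C M N p hp).comp
    ((TensorProduct.mk k (ExtX k C M.X) (ExtX k C N.X)) m')).toAddMonoidHom
  map_zero' := by
    ext n'
    simp
  map_add' m₁ m₂ := by
    ext n'
    simp [TensorProduct.add_tmul]

/-- `p'` on the plain tensor product. -/
def P0 (hp : IsBimodHom B B (BalTensor A M.X N.X) B p) :
    TensorProduct ℤ (ExtX k C M.X) (ExtX k C N.X) →+ B ⊗[k] C :=
  TensorProduct.liftAddHom (pF k A B C M N p hp) fun z m' n' => by
    rw [map_zsmul, AddMonoidHom.smul_apply, map_zsmul]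

lemma P0_tmul (hp : IsBimodHom B B (BalTensor A M.X N.X) B p)
    (m' : ExtX k C M.X) (n' : ExtX k C N.X) :
    P0 k A B C M N p hp (m' ⊗ₜ[ℤ] n') = Phi k A B C M N p hp (m' ⊗ₜ[k] n') := rfl

lemma Phi_balance (hp : IsBimodHom B B (BalTensor A M.X N.X) B p)
    (ρ : A ⊗[k] C) (m' : ExtX k C M.X) (n' : ExtX k C N.X) :
    Phi k A B C M N p hp ((op ρ • m') ⊗ₜ[k] n') = Phi k A B C M N p hp (m' ⊗ₜ[k] (ρ • n')) := by
  induction ρ using TensorProduct.induction_on with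
  | zero =>
      simp only [op_zero, zero_smul, TensorProduct.zero_tmul, TensorProduct.tmul_zero, map_zero]
  | tmul a c =>
      induction m' using ExtX.induction_on with
      | zero => simp only [smul_zero, TensorProduct.zero_tmul, map_zero]
      | tmul m c₁ =>
          induction n' using ExtX.induction_on with
          | zero => simp only [smul_zero, TensorProduct.tmul_zero, map_zero]; erw [TensorProduct.tmul_zero, map_zero]
          | tmul n c₂ =>
              rw [ext_rsmul_tmul, ext_lsmul_tmul, Phi_tmul, Phi_tmul, BalTensor.balance,
                mul_assoc]
          | add n₁ n₂ h₁ h₂ =>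
              simp only [TensorProduct.tmul_add, smul_add, map_add, h₁, h₂]; erw [TensorProduct.tmul_add, map_add]
      | add m₁ m₂ h₁ h₂ =>
          simp only [smul_add, TensorProduct.add_tmul, map_add, h₁, h₂]
  | add ρ₁ ρ₂ h₁ h₂ =>
      simp only [op_add, add_smul, TensorProduct.add_tmul, TensorProduct.tmul_add, map_add,
        h₁, h₂]

lemma P0_rel (hp : IsBimodHom B B (BalTensor A M.X N.X) B p) :
    balRel (A ⊗[k] C) (ExtX k C M.X) (ExtX k C N.X) ≤
      LinearMap.ker (P0 k A B C M N p hp).toIntLinearMap := by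
  rw [balRel, Submodule.span_le]
  rintro z ⟨ρ, m', n', rfl⟩
  simp only [SetLike.mem_coe, LinearMap.mem_ker, map_sub, AddMonoidHom.coe_toIntLinearMap]
  rw [sub_eq_zero]
  show P0 k A B C M N p hp ((op ρ • m') ⊗ₜ[ℤ] n') = P0 k A B C M N p hp (m' ⊗ₜ[ℤ] (ρ • n'))
  rw [P0_tmul, P0_tmul, Phi_balance]

/-- The projection `(M ⊗ C) ⊗_{A ⊗ C} (N ⊗ C) → B ⊗ C`. -/
def pLin (hp : IsBimodHom B B (BalTensor A M.X N.X) B p) :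
    BalTensor (A ⊗[k] C) (ExtX k C M.X) (ExtX k C N.X) →ₗ[ℤ] B ⊗[k] C :=
  Submodule.liftQ _ (P0 k A B C M N p hp).toIntLinearMap (P0_rel k A B C M N p hp)

lemma pLin_tmul (hp : IsBimodHom B B (BalTensor A M.X N.X) B p)
    (m' : ExtX k C M.X) (n' : ExtX k C N.X) :
    pLin k A B C M N p hp (BalTensor.tmul (A ⊗[k] C) (ExtX k C M.X) (ExtX k C N.X) m' n')
      = Phi k A B C M N p hp (m' ⊗ₜ[k] n') := rfl

lemma Phi_lact (hp : IsBimodHom B B (BalTensor A M.X N.X) B p)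
    (ρ : B ⊗[k] C) (m' : ExtX k C M.X) (n' : ExtX k C N.X) :
    Phi k A B C M N p hp ((ρ • m') ⊗ₜ[k] n') = ρ • Phi k A B C M N p hp (m' ⊗ₜ[k] n') := by
  induction ρ using TensorProduct.induction_on with
  | zero => simp only [zero_smul, TensorProduct.zero_tmul, map_zero]
  | tmul b c =>
      induction m' using ExtX.induction_on with
      | zero => simp only [smul_zero, TensorProduct.zero_tmul, map_zero]
      | tmul m c₁ =>
          induction n' using ExtX.induction_on with
          | zero => simp only [TensorProduct.tmul_zero, map_zero, smul_zero]; erw [TensorProduct.tmul_zero, map_zero, smul_zero]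
          | tmul n c₂ =>
              rw [ext_lsmul_tmul, Phi_tmul, Phi_tmul, ← BalTensor.lsmul_tmul, hp.map_lsmul,
                smul_eq_mul, smul_eq_mul, Algebra.TensorProduct.tmul_mul_tmul, mul_assoc]
          | add n₁ n₂ h₁ h₂ =>
              simp only [TensorProduct.tmul_add, map_add, smul_add, h₁, h₂]; erw [TensorProduct.tmul_add, map_add, smul_add]
      | add m₁ m₂ h₁ h₂ =>
          simp only [smul_add, TensorProduct.add_tmul, map_add, h₁, h₂]
  | add ρ₁ ρ₂ h₁ h₂ =>
      simp only [add_smul, TensorProduct.add_tmul, map_add, h₁, h₂]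

lemma Phi_ract (hp : IsBimodHom B B (BalTensor A M.X N.X) B p)
    (σ : B ⊗[k] C) (m' : ExtX k C M.X) (n' : ExtX k C N.X) :
    Phi k A B C M N p hp (m' ⊗ₜ[k] (op σ • n')) = op σ • Phi k A B C M N p hp (m' ⊗ₜ[k] n') := by
  induction σ using TensorProduct.induction_on with
  | zero => simp only [op_zero, zero_smul, TensorProduct.tmul_zero, map_zero]
  | tmul b c =>
      induction m' using ExtX.induction_on with
      | zero => simp only [TensorProduct.zero_tmul, map_zero, smul_zero]
      | tmul m c₁ =>
          induction n' using ExtX.induction_on with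
          | zero => simp only [smul_zero, TensorProduct.tmul_zero, map_zero]; erw [TensorProduct.tmul_zero, map_zero, smul_zero]
          | tmul n c₂ =>
              rw [ext_rsmul_tmul, Phi_tmul, Phi_tmul, ← BalTensor.rsmul_tmul, hp.map_rsmul,
                op_smul_eq_mul, op_smul_eq_mul, Algebra.TensorProduct.tmul_mul_tmul, mul_assoc]
          | add n₁ n₂ h₁ h₂ =>
              simp only [smul_add, TensorProduct.tmul_add, map_add, h₁, h₂]; erw [TensorProduct.tmul_add, TensorProduct.tmul_add, map_add, map_add, h₁, h₂, smul_add]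
      | add m₁ m₂ h₁ h₂ =>
          simp only [TensorProduct.add_tmul, map_add, smul_add, h₁, h₂]
  | add σ₁ σ₂ h₁ h₂ =>
      simp only [op_add, add_smul, TensorProduct.tmul_add, map_add, h₁, h₂]

lemma pLin_lsmul (hp : IsBimodHom B B (BalTensor A M.X N.X) B p)
    (ρ : B ⊗[k] C) (y : BalTensor (A ⊗[k] C) (ExtX k C M.X) (ExtX k C N.X)) :
    pLin k A B C M N p hp (ρ • y) = ρ • pLin k A B C M N p hp y := by
  obtain ⟨t', rfl⟩ := BalTensor.mk_surjective (A ⊗[k] C) (ExtX k C M.X) (ExtX k C N.X) y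
  induction t' using TensorProduct.induction_on with
  | zero => simp only [map_zero, smul_zero]
  | tmul m' n' =>
      rw [show BalTensor.mk (A ⊗[k] C) (ExtX k C M.X) (ExtX k C N.X) (m' ⊗ₜ[ℤ] n')
          = BalTensor.tmul (A ⊗[k] C) (ExtX k C M.X) (ExtX k C N.X) m' n' from rfl,
        BalTensor.lsmul_tmul, pLin_tmul, pLin_tmul, Phi_lact]
  | add t₁ t₂ h₁ h₂ => simp only [map_add, smul_add, h₁, h₂]

lemma pLin_rsmul (hp : IsBimodHom B B (BalTensor A M.X N.X) B p)
    (σ : (B ⊗[k] C)ᵐᵒᵖ) (y : BalTensor (A ⊗[k] C) (ExtX k C M.X) (ExtX k C N.X)) :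
    pLin k A B C M N p hp (σ • y) = σ • pLin k A B C M N p hp y := by
  obtain ⟨z, rfl⟩ : ∃ z, σ = op z := ⟨σ.unop, rfl⟩
  obtain ⟨t', rfl⟩ := BalTensor.mk_surjective (A ⊗[k] C) (ExtX k C M.X) (ExtX k C N.X) y
  induction t' using TensorProduct.induction_on with
  | zero => simp only [map_zero, smul_zero]
  | tmul m' n' =>
      rw [show BalTensor.mk (A ⊗[k] C) (ExtX k C M.X) (ExtX k C N.X) (m' ⊗ₜ[ℤ] n')
          = BalTensor.tmul (A ⊗[k] C) (ExtX k C M.X) (ExtX k C N.X) m' n' from rfl,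
        BalTensor.rsmul_tmul, pLin_tmul, pLin_tmul, Phi_ract]
  | add t₁ t₂ h₁ h₂ => simp only [map_add, smul_add, h₁, h₂]

lemma pLin_psi (hp : IsBimodHom B B (BalTensor A M.X N.X) B p)
    (w : BalTensor A M.X N.X) :
    pLin k A B C M N p hp (psiLin k A B C M N w) = (p w) ⊗ₜ[k] (1 : C) := by
  have hp0 : p 0 = 0 := by
    have h := hp.map_add 0 0
    rw [add_zero] at h
    exact left_eq_add.mp h
  obtain ⟨t, rfl⟩ := BalTensor.mk_surjective A M.X N.X w
  induction t using TensorProduct.induction_on with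
  | zero => rw [map_zero, map_zero, map_zero, hp0, TensorProduct.zero_tmul]
  | tmul m n =>
      erw [show BalTensor.mk A M.X N.X (m ⊗ₜ[ℤ] n) = BalTensor.tmul A M.X N.X m n from rfl,
        psi_tmul, pLin_tmul, Phi_tmul, one_mul]
  | add t₁ t₂ h₁ h₂ =>
      simp only [map_add, hp.map_add, TensorProduct.add_tmul, h₁, h₂]

lemma balp_smul_comm (ρ : B ⊗[k] C) (σ : (B ⊗[k] C)ᵐᵒᵖ)
    (y : BalTensor (A ⊗[k] C) (ExtX k C M.X) (ExtX k C N.X)) :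
    ρ • σ • y = σ • ρ • y := smul_comm ρ σ y

lemma iT_lsmul (hi : IsBimodHom B B B (BalTensor A M.X N.X) i)
    (ρ : B ⊗[k] C) (x : B ⊗[k] C) :
    iT k A B C M N i hi (ρ • x) = ρ • iT k A B C M N i hi x := by
  have katom : ∀ (b' : B) (c' : C) (x : B ⊗[k] C),
      iT k A B C M N i hi ((b' ⊗ₜ[k] c') • x) = (b' ⊗ₜ[k] c') • iT k A B C M N i hi x := by
    intro b' c' x
    induction x using TensorProduct.induction_on with
    | zero => simp only [smul_zero, map_zero]
    | tmul b c =>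
        have hx : ((b' ⊗ₜ[k] c') : B ⊗[k] C) • (b ⊗ₜ[k] c) = (b' * b) ⊗ₜ[k] (c' * c) := by
          rw [smul_eq_mul, Algebra.TensorProduct.tmul_mul_tmul]
        have h1 : i (b' * b) = b' • i b := by
          rw [← smul_eq_mul]
          exact hi.map_lsmul b' b
        have h2 : ((b' ⊗ₜ[k] c') : B ⊗[k] C) = (b' ⊗ₜ[k] (1 : C)) * ((1 : B) ⊗ₜ[k] c') := by
          rw [Algebra.TensorProduct.tmul_mul_tmul, mul_one, one_mul]
        rw [hx, iT_tmul, iT_tmul, h1, psi_lsmul,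
          balp_smul_comm k A B C M N (b' ⊗ₜ[k] c') (op ((1 : B) ⊗ₜ[k] c))
            (psiLin k A B C M N (i b)),
          h2, mul_smul, psi_mid,
          balp_smul_comm k A B C M N (b' ⊗ₜ[k] (1 : C)) (op ((1 : B) ⊗ₜ[k] c'))
            (psiLin k A B C M N (i b)),
          ← mul_smul (op (((1 : B) ⊗ₜ[k] c) : B ⊗[k] C)) (op (((1 : B) ⊗ₜ[k] c') : B ⊗[k] C)),
          ← op_mul, Algebra.TensorProduct.tmul_mul_tmul, one_mul]
    | add x y hx hy => simp only [smul_add, map_add, hx, hy]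
  induction ρ using TensorProduct.induction_on with
  | zero => simp only [zero_smul, map_zero]
  | tmul b' c' => exact katom b' c' x
  | add ρ₁ ρ₂ h₁ h₂ => simp only [add_smul, map_add, h₁, h₂]

lemma iT_rsmul (hi : IsBimodHom B B B (BalTensor A M.X N.X) i)
    (σ : (B ⊗[k] C)ᵐᵒᵖ) (x : B ⊗[k] C) :
    iT k A B C M N i hi (σ • x) = σ • iT k A B C M N i hi x := by
  obtain ⟨z, rfl⟩ : ∃ z, σ = op z := ⟨σ.unop, rfl⟩
  have katom : ∀ (b₀ : B) (c₀ : C) (x : B ⊗[k] C),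
      iT k A B C M N i hi (op (b₀ ⊗ₜ[k] c₀) • x) = op (b₀ ⊗ₜ[k] c₀) • iT k A B C M N i hi x := by
    intro b₀ c₀ x
    induction x using TensorProduct.induction_on with
    | zero => simp only [smul_zero, map_zero]
    | tmul b c =>
        have hx : (op ((b₀ ⊗ₜ[k] c₀) : B ⊗[k] C)) • (b ⊗ₜ[k] c) = (b * b₀) ⊗ₜ[k] (c * c₀) := by
          rw [op_smul_eq_mul, Algebra.TensorProduct.tmul_mul_tmul]
        rw [hx, iT_tmul, iT_tmul]
        have h1 : i (b * b₀) = op b₀ • i b := by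
          rw [← op_smul_eq_mul]
          exact hi.map_rsmul (op b₀) b
        rw [h1, psi_rsmul, ← mul_smul, ← mul_smul, ← op_mul, ← op_mul,
          Algebra.TensorProduct.tmul_mul_tmul, Algebra.TensorProduct.tmul_mul_tmul,
          one_mul, mul_one, one_mul]
    | add x y hx hy => simp only [smul_add, map_add, hx, hy]
  induction z using TensorProduct.induction_on with
  | zero => simp only [op_zero, zero_smul, map_zero]
  | tmul b₀ c₀ => exact katom b₀ c₀ x
  | add z₁ z₂ h₁ h₂ => simp only [op_add, add_smul, map_add, h₁, h₂]

lemma pLin_iT (hi : IsBimodHom B B B (BalTensor A M.X N.X) i)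
    (hp : IsBimodHom B B (BalTensor A M.X N.X) B p)
    (hpi : ∀ b, p (i b) = b) (x : B ⊗[k] C) :
    pLin k A B C M N p hp (iT k A B C M N i hi x) = x := by
  induction x using TensorProduct.induction_on with
  | zero => simp only [map_zero]
  | tmul b c =>
      rw [iT_tmul, pLin_rsmul, pLin_psi, hpi, op_smul_eq_mul,
        Algebra.TensorProduct.tmul_mul_tmul, one_mul, mul_one]
  | add x y hx hy => simp only [map_add, hx, hy]

end WithMaps

/-- Tensoring on the right by `C` preserves `≥_J`. -/
theorem jge_tensor (h : Jge k B A) : Jge k (B ⊗[k] C) (A ⊗[k] C) := by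
  obtain ⟨M, N, i, p, hi, hp, hpi⟩ := h
  refine ⟨⟨ExtX k C M.X⟩, ⟨ExtX k C N.X⟩,
    iT k A B C M N i hi, pLin k A B C M N p hp, ?_, ?_, ?_⟩
  · exact ⟨fun x y => map_add _ x y,
      fun ρ x => iT_lsmul k A B C M N i hi ρ x,
      fun σ x => iT_rsmul k A B C M N i hi σ x⟩
  · exact ⟨fun x y => map_add _ x y,
      fun ρ y => pLin_lsmul k A B C M N p hp ρ y,
      fun σ y => pLin_rsmul k A B C M N p hp σ y⟩
  · exact pLin_iT k A B C M N i p hi hp hpi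

end Main


open scoped TensorProduct in
/-- If `A ≤_J B` then `A ⊗_k C ≤_J B ⊗_k C` and `C ⊗_k A ≤_J C ⊗_k B`;
in particular `A ∼_J B` implies `A ⊗_k C ∼_J B ⊗_k C`. -/
theorem stmt12 (k A B C : Type u) [Field k]
    [Ring A] [Algebra k A] [FiniteDimensional k A]
    [Ring B] [Algebra k B] [FiniteDimensional k B]
    [Ring C] [Algebra k C] [FiniteDimensional k C]
    (h : Jge k B A) :
    Jge k (B ⊗[k] C) (A ⊗[k] C) ∧ Jge k (C ⊗[k] B) (C ⊗[k] A) ∧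
    (Jequiv k A B → Jequiv k (A ⊗[k] C) (B ⊗[k] C)) := by
  refine ⟨jge_tensor k A B C h, ?_, fun he => ⟨jge_tensor k B A C he.1, jge_tensor k A B C he.2⟩⟩
  exact Jge_congr k (B ⊗[k] C) (A ⊗[k] C) (C ⊗[k] B) (C ⊗[k] A)
    (Algebra.TensorProduct.comm k C B) (Algebra.TensorProduct.comm k C A)
    (jge_tensor k A B C h)

end

end JJ
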